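/- Define f on k⁴ variables as the OR of k² disjoint copies of g. For every restriction ρ of f leaving at most C·k³ free variables (for a constant C), the certificate complexity of the restricted function satisfies C(f|_ρ) ≤ C·k² + 2k² + k², i.e., C(f|_ρ) = O(k²). -/

import Mathlib

section Defs
variable {I : Type*} [Fintype I] [DecidableEq I]

/-- Flip a single bit of the input. -/
def flipOne (i : I) (x : I → Bool) : I → Bool := Function.update x i (!x i)

/-- Flip all bits in the block `B`. -/
def flipSet (B : Finset I) (x : I → Bool) : I → Bool := fun j => if j ∈ B then !x j else x j

/-- Sensitivity of `f` at `x`: the number of coordinates whose flip changes the value. -/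
def sensAt (f : (I → Bool) → Bool) (x : I → Bool) : ℕ :=
  (Finset.univ.filter fun i => f (flipOne i x) ≠ f x).card

/-- Sensitivity of `f`. -/
noncomputable def sensF (f : (I → Bool) → Bool) : ℕ := sSup (Set.range (sensAt f))

/-- There exist `m` pairwise disjoint sensitive blocks for `f` at `x`. -/
def SensBlocks (f : (I → Bool) → Bool) (x : I → Bool) (m : ℕ) : Prop :=
  ∃ B : Fin m → Finset I, (∀ a b, a ≠ b → Disjoint (B a) (B b)) ∧
    ∀ a, f (flipSet (B a) x) ≠ f x

/-- Block sensitivity of `f`. -/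
noncomputable def bsF (f : (I → Bool) → Bool) : ℕ := sSup {m | ∃ x, SensBlocks f x m}

/-- `S` is a certificate for `f` at `x`. -/
def IsCert (f : (I → Bool) → Bool) (x : I → Bool) (S : Finset I) : Prop :=
  ∀ y, (∀ i ∈ S, y i = x i) → f y = f x

/-- Certificate complexity of `f` at `x`. -/
noncomputable def certAt (f : (I → Bool) → Bool) (x : I → Bool) : ℕ :=
  sInf {m | ∃ S : Finset I, IsCert f x S ∧ S.card = m}

/-- Certificate complexity of `f`. -/
noncomputable def certF (f : (I → Bool) → Bool) : ℕ := sSup (Set.range (certAt f))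

/-- Restrict `f` by the partial assignment `ρ`; the result is a function on the
free variables (those with `ρ i = none`). -/
def restrictTo (ρ : I → Option Bool) (f : (I → Bool) → Bool) :
    ({i : I // ρ i = none} → Bool) → Bool :=
  fun y => f fun i => if h : ρ i = none then y ⟨i, h⟩ else (ρ i).getD false

end Defs

/-- The base Rubinstein-type function on `k²` variables: value `1` iff exactly one aligned
contiguous block of `k` variables is all-`1` and all other variables are `0`. -/
def rub (k : ℕ) (x : Fin (k ^ 2) → Bool) : Bool :=
  decide (∃ j : Fin k, ∀ i : Fin (k ^ 2),
    (x i = true ↔ (j.val * k ≤ i.val ∧ i.val < j.val * k + k)))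

/-- The OR of `k²` disjoint copies of the base Rubinstein-type function. -/
def bigRub (k : ℕ) (x : Fin (k ^ 2) × Fin (k ^ 2) → Bool) : Bool :=
  decide (∃ c : Fin (k ^ 2), rub k (fun t => x (c, t)) = true)

/-- Deterministic single-bit decision trees. -/
inductive DTree (I : Type*) : Type _
  | leaf : Bool → DTree I
  | node : I → DTree I → DTree I → DTree I

namespace DTree
variable {I : Type*}

def eval : DTree I → (I → Bool) → Bool
  | leaf b, _ => b
  | node i t0 t1, x => bif x i then t1.eval x else t0.eval x

def depth : DTree I → ℕ
  | leaf _ => 0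
  | node _ t0 t1 => max t0.depth t1.depth + 1

/-- Maximum number of queries answered `0` on a root-to-leaf path. -/
def zeroDepth : DTree I → ℕ
  | leaf _ => 0
  | node _ t0 t1 => max (t0.zeroDepth + 1) t1.zeroDepth

end DTree

/-- AND-decision trees: each node queries the conjunction of a subset of variables. -/
inductive ADTree (I : Type*) : Type _
  | leaf : Bool → ADTree I
  | node : Finset I → ADTree I → ADTree I → ADTree I

namespace ADTree
variable {I : Type*}

def eval : ADTree I → (I → Bool) → Bool
  | leaf b, _ => b
  | node S t0 t1, x => if ∀ i ∈ S, x i = true then t1.eval x else t0.eval x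

def depth : ADTree I → ℕ
  | leaf _ => 0
  | node _ t0 t1 => max t0.depth t1.depth + 1

end ADTree

/-- The 0-query complexity: smallest 0-depth of a decision tree computing `f`. -/
noncomputable def zeroQuery {I : Type*} (f : (I → Bool) → Bool) : ℕ :=
  sInf {d | ∃ T : DTree I, (∀ x, T.eval x = f x) ∧ T.zeroDepth = d}

/-- The AND-query complexity: smallest depth of an AND-decision tree computing `f`. -/
noncomputable def andQuery {I : Type*} (f : (I → Bool) → Bool) : ℕ :=
  sInf {d | ∃ T : ADTree I, (∀ x, T.eval x = f x) ∧ T.depth = d}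

/-- `TRIBES_n`: the AND of `n` disjoint ORs of `n` variables each. -/
def tribes (n : ℕ) (x : Fin n × Fin n → Bool) : Bool :=
  decide (∀ i : Fin n, ∃ j : Fin n, x (i, j) = true)


/-- The indicator of the `j`-th aligned block. -/
def patt (k : ℕ) (j : Fin k) (t : Fin (k ^ 2)) : Bool :=
  decide (j.val * k ≤ t.val ∧ t.val < j.val * k + k)

lemma rub_eq_true_iff (k : ℕ) (z : Fin (k ^ 2) → Bool) :
    rub k z = true ↔ ∃ j : Fin k, ∀ t, z t = patt k j t := by
  simp only [rub, decide_eq_true_eq, patt]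
  refine exists_congr fun j => forall_congr' fun t => ?_
  cases h : z t <;> simp [h]

lemma block_unique {k : ℕ} {j j' : Fin k} {t : ℕ}
    (h1 : j.val * k ≤ t ∧ t < j.val * k + k)
    (h2 : j'.val * k ≤ t ∧ t < j'.val * k + k) : j = j' := by
  refine Fin.ext ?_
  rcases Nat.lt_trichotomy j.val j'.val with h | h | h
  · exfalso
    have hm : (j.val + 1) * k ≤ j'.val * k := Nat.mul_le_mul_right _ h
    rw [Nat.succ_mul] at hm
    linarith [h1.1, h1.2, h2.1, h2.2]
  · exact h
  · exfalso
    have hm : (j'.val + 1) * k ≤ j.val * k := Nat.mul_le_mul_right _ h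
    rw [Nat.succ_mul] at hm
    linarith [h1.1, h1.2, h2.1, h2.2]

/-- Index of position `s` inside block `j`. -/
def blkIdx {k : ℕ} (j : Fin k) (s : Fin k) : Fin (k ^ 2) :=
  ⟨j.val * k + s.val, by
    have h1 : j.val * k + s.val < (j.val + 1) * k := by
      rw [Nat.succ_mul]; exact Nat.add_lt_add_left s.isLt _
    have h2 : (j.val + 1) * k ≤ k * k := Nat.mul_le_mul_right _ j.isLt
    have : k * k = k ^ 2 := (sq k).symm
    omega⟩

lemma blkIdx_mem {k : ℕ} (j s : Fin k) :
    j.val * k ≤ (blkIdx j s).val ∧ (blkIdx j s).val < j.val * k + k := by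
  simp only [blkIdx]
  exact ⟨Nat.le_add_right _ _, Nat.add_lt_add_left s.isLt _⟩

/-- every restriction of `f` (the OR of `k²` copies of `g`) leaving at most
`C·k³` free variables has certificate complexity at most `C·k² + 2k² + k² = O(k²)`. -/
theorem stmt11 (k C : ℕ) (hk : 2 ≤ k)
    (ρ : Fin (k ^ 2) × Fin (k ^ 2) → Option Bool)
    (hfree : Fintype.card {i : Fin (k ^ 2) × Fin (k ^ 2) // ρ i = none} ≤ C * k ^ 3)
    (x : {i : Fin (k ^ 2) × Fin (k ^ 2) // ρ i = none} → Bool) :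
    ∃ S : Finset {i : Fin (k ^ 2) × Fin (k ^ 2) // ρ i = none},
      IsCert (restrictTo ρ (bigRub k)) x S ∧
      S.card ≤ C * k ^ 2 + 2 * k ^ 2 + k ^ 2 := by
  classical
  have hkpos : 0 < k := by omega
  set X : Fin (k ^ 2) × Fin (k ^ 2) → Bool :=
    fun i => if h : ρ i = none then x ⟨i, h⟩ else (ρ i).getD false with hX
  have hRx : restrictTo ρ (bigRub k) x = bigRub k X := rfl
  have hRy : ∀ y, restrictTo ρ (bigRub k) y =
      bigRub k (fun i => if h : ρ i = none then y ⟨i, h⟩ else (ρ i).getD false) := fun _ => rfl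
  by_cases hx : bigRub k X = true
  · -- the function is true at x: certify with the free variables of a satisfied row
    rw [bigRub, decide_eq_true_eq] at hx
    obtain ⟨c, hc⟩ := hx
    refine ⟨Finset.univ.filter (fun i => i.1.1 = c), ?_, ?_⟩
    · intro y hy
      rw [hRx, hRy]
      set Y : Fin (k ^ 2) × Fin (k ^ 2) → Bool :=
        fun i => if h : ρ i = none then y ⟨i, h⟩ else (ρ i).getD false with hY
      have hrow : (fun t => Y (c, t)) = (fun t => X (c, t)) := by
        funext t
        by_cases h : ρ (c, t) = none
        · simp only [hY, hX, dif_pos h]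
          exact hy ⟨(c, t), h⟩ (by simp)
        · simp only [hY, hX, dif_neg h]
      have hcy : rub k (fun t => Y (c, t)) = true := by rw [hrow]; exact hc
      have h1 : bigRub k Y = true := by
        rw [bigRub, decide_eq_true_eq]; exact ⟨c, hcy⟩
      have h2 : bigRub k X = true := by
        rw [bigRub, decide_eq_true_eq]; exact ⟨c, hc⟩
      rw [h1, h2]
    · have hle : (Finset.univ.filter
          (fun i : {i : Fin (k ^ 2) × Fin (k ^ 2) // ρ i = none} => i.1.1 = c)).card
          ≤ Fintype.card (Fin (k ^ 2)) := by
        rw [← Finset.card_univ]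
        refine Finset.card_le_card_of_injOn (fun i => i.1.2)
          (fun _ _ => Finset.mem_univ _) ?_
        intro a ha b hb hab
        simp only [Finset.coe_filter, Set.mem_setOf_eq] at ha hb
        exact Subtype.ext (Prod.ext (ha.2.trans hb.2.symm) hab)
      simp only [Fintype.card_fin] at hle
      exact hle.trans (Nat.le_add_left _ _)
  · -- the function is false at x
    have hxf : bigRub k X = false := by
      cases h : bigRub k X
      · rfl
      · exact absurd h hx
    -- consistent (row, block) pairs
    set P : Finset (Fin (k ^ 2) × Fin k) := Finset.univ.filter
      (fun p => ∀ t : Fin (k ^ 2), ∀ b, ρ (p.1, t) = some b → b = patt k p.2 t) with hP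
    have hconsist : ∀ p ∈ P, ∀ t : Fin (k ^ 2), ∀ b, ρ (p.1, t) = some b → b = patt k p.2 t := by
      intro p hp
      simpa [hP] using (Finset.mem_filter.mp hp).2
    have h1 : ∀ p ∈ P, ∃ i : {i : Fin (k ^ 2) × Fin (k ^ 2) // ρ i = none},
        i.1.1 = p.1 ∧ x i ≠ patt k p.2 i.1.2 := by
      intro p hp
      have hrow : rub k (fun t => X (p.1, t)) = false := by
        cases h : rub k (fun t => X (p.1, t))
        · rfl
        · exfalso
          have : bigRub k X = true := by
            rw [bigRub, decide_eq_true_eq]; exact ⟨p.1, h⟩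
          rw [hxf] at this; exact Bool.false_ne_true this
      have hnot : ¬ ∀ t, X (p.1, t) = patt k p.2 t := by
        intro hall
        have : rub k (fun t => X (p.1, t)) = true :=
          (rub_eq_true_iff k _).mpr ⟨p.2, hall⟩
        rw [hrow] at this; exact Bool.false_ne_true this
      push_neg at hnot
      obtain ⟨t, ht⟩ := hnot
      have hfree : ρ (p.1, t) = none := by
        by_contra hne
        obtain ⟨b, hb⟩ := Option.ne_none_iff_exists'.mp hne
        have hXv : X (p.1, t) = b := by simp [hX, dif_neg, hb]
        exact ht (hXv.trans (hconsist p hp t b hb))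
      refine ⟨⟨(p.1, t), hfree⟩, rfl, ?_⟩
      have hXv : X (p.1, t) = x ⟨(p.1, t), hfree⟩ := by simp [hX, dif_pos hfree]
      rw [← hXv]; exact ht
    choose w hw1 hw2 using h1
    refine ⟨P.attach.image (fun q => w q.1 q.2), ?_, ?_⟩
    · -- certificate property
      intro y hy
      rw [hRx, hRy, hxf]
      set Y : Fin (k ^ 2) × Fin (k ^ 2) → Bool :=
        fun i => if h : ρ i = none then y ⟨i, h⟩ else (ρ i).getD false with hY
      cases hbY : bigRub k Y
      · rfl
      · exfalso
        rw [bigRub, decide_eq_true_eq] at hbY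
        obtain ⟨c, hc⟩ := hbY
        rw [rub_eq_true_iff] at hc
        obtain ⟨j, hj⟩ := hc
        have hmem : (c, j) ∈ P := by
          rw [hP, Finset.mem_filter]
          refine ⟨Finset.mem_univ _, ?_⟩
          intro t b hb
          have hYv : Y (c, t) = b := by simp [hY, dif_neg, hb]
          rw [← hYv]; exact hj t
        set i := w (c, j) hmem with hi
        have hiS : i ∈ P.attach.image (fun q => w q.1 q.2) :=
          Finset.mem_image.mpr ⟨⟨(c, j), hmem⟩, Finset.mem_attach _ _, rfl⟩
        have hyx : y i = x i := hy i hiS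
        have hi1 : i.1 = (c, i.1.2) := by
          have := hw1 (c, j) hmem
          rw [← hi] at this
          exact Prod.ext this rfl
        have hYi : Y i.1 = y i := by
          simp only [hY]
          rw [dif_pos i.2]
        have : x i = patt k j i.1.2 := by
          rw [← hyx, ← hYi, hi1]
          exact hj i.1.2
        exact hw2 (c, j) hmem this
    · -- cardinality bound
      have hcard1 : (P.attach.image (fun q => w q.1 q.2)).card ≤ P.card := by
        calc (P.attach.image (fun q => w q.1 q.2)).card ≤ P.attach.card :=
              Finset.card_image_le
          _ = P.card := Finset.card_attach
      -- split P
      set P1 := P.filter (fun p => ∃ t, ρ (p.1, t) = some true) with hP1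
      set P0 := P.filter (fun p => ¬ ∃ t, ρ (p.1, t) = some true) with hP0
      have hsplit : P1.card + P0.card = P.card :=
        Finset.card_filter_add_card_filter_not _
      have hbound1 : P1.card ≤ k ^ 2 := by
        have : P1.card ≤ Fintype.card (Fin (k ^ 2)) := by
          rw [← Finset.card_univ]
          refine Finset.card_le_card_of_injOn Prod.fst (fun _ _ => Finset.mem_univ _) ?_
          intro p hp q hq hpq
          simp only [Finset.mem_coe, hP1, Finset.mem_filter] at hp hq
          obtain ⟨hpP, t, ht⟩ := hp
          obtain ⟨hqP, _⟩ := hq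
          have h1 : true = patt k p.2 t := hconsist p hpP t true ht
          have h2 : true = patt k q.2 t := by
            refine hconsist q hqP t true ?_
            rw [← hpq]; exact ht
          rw [eq_comm, patt, decide_eq_true_eq] at h1 h2
          exact Prod.ext hpq (block_unique h1 h2)
        simpa using this
      have hbound0 : P0.card ≤ C * k ^ 2 := by
        have hblockfree : ∀ p ∈ P0, ∀ s : Fin k, ρ (p.1, blkIdx p.2 s) = none := by
          intro p hp s
          simp only [hP0, Finset.mem_filter] at hp
          obtain ⟨hpP, hno⟩ := hp
          by_contra hne
          obtain ⟨b, hb⟩ := Option.ne_none_iff_exists'.mp hne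
          have : b = patt k p.2 (blkIdx p.2 s) := hconsist p hpP _ b hb
          rw [patt] at this
          have hbt : b = true := by
            rw [this, decide_eq_true_eq]
            exact blkIdx_mem p.2 s
          exact hno ⟨blkIdx p.2 s, hbt ▸ hb⟩
        have hprod : (P0 ×ˢ (Finset.univ : Finset (Fin k))).card ≤
            (Finset.univ.filter (fun i : Fin (k ^ 2) × Fin (k ^ 2) => ρ i = none)).card := by
          refine Finset.card_le_card_of_injOn
            (fun q => (q.1.1, blkIdx q.1.2 q.2)) ?_ ?_
          · intro q hq
            rw [Finset.mem_coe, Finset.mem_product] at hq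
            simp only [Finset.mem_coe, Finset.mem_filter, Finset.mem_univ, true_and]
            exact hblockfree q.1 hq.1 q.2
          · intro a ha b hb hab
            simp only [Prod.mk.injEq] at hab
            obtain ⟨h1, h2⟩ := hab
            have hv : (blkIdx a.1.2 a.2).val = (blkIdx b.1.2 b.2).val := by rw [h2]
            simp only [blkIdx] at hv
            have hj : a.1.2 = b.1.2 := by
              refine block_unique (j := a.1.2) (j' := b.1.2) (t := a.1.2.val * k + a.2.val)
                ⟨Nat.le_add_right _ _, Nat.add_lt_add_left a.2.isLt _⟩ ?_
              rw [hv]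
              exact ⟨Nat.le_add_right _ _, Nat.add_lt_add_left b.2.isLt _⟩
            have hs : a.2 = b.2 := by
              rw [hj] at hv
              exact Fin.ext (Nat.add_left_cancel hv)
            exact Prod.ext (Prod.ext h1 hj) hs
        rw [Finset.card_product, Finset.card_univ, Fintype.card_fin] at hprod
        have hFcard : (Finset.univ.filter
            (fun i : Fin (k ^ 2) × Fin (k ^ 2) => ρ i = none)).card ≤ C * k ^ 3 := by
          rw [← Fintype.card_subtype]
          exact hfree
        have hk3 : C * k ^ 3 = C * k ^ 2 * k := by ring
        have : P0.card * k ≤ C * k ^ 2 * k := by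
          rw [← hk3]; exact hprod.trans hFcard
        exact Nat.le_of_mul_le_mul_right this hkpos
      calc (P.attach.image (fun q => w q.1 q.2)).card ≤ P.card := hcard1
        _ = P1.card + P0.card := hsplit.symm
        _ ≤ k ^ 2 + C * k ^ 2 := Nat.add_le_add hbound1 hbound0
        _ ≤ C * k ^ 2 + 2 * k ^ 2 + k ^ 2 := by linarith
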